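/- arXiv:1910.01534 — 2 statements merged into one kernel-verified Lean document; each statement's English description precedes it below -/
import Mathlib

section
/- For every integer k ≥ 1, the integer 4k divides 1 - (1-2k)^k + 2k^2. Consequently the Euler characteristic χ(k) = (1 - (1-2k)^k + 2k^2)/(2k) is an even integer. -/
lemma sq_dvd_one_add_pow (x : ℤ) : ∀ n : ℕ, x ^ 2 ∣ (1 + x) ^ n - 1 - n * x
  | 0 => by simp
  | n + 1 => by
    obtain ⟨c, hc⟩ := sq_dvd_one_add_pow x n
    refine ⟨(1 + x) * c + n, ?_⟩
    have : (1 + x) ^ n = 1 + n * x + x ^ 2 * c := by linarith [hc]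
    push_cast
    calc (1 + x) ^ (n + 1) - 1 - (↑n + 1) * x
        = (1 + x) * (1 + n * x + x ^ 2 * c) - 1 - (↑n + 1) * x := by rw [← this]; ring
      _ = x ^ 2 * ((1 + x) * c + ↑n) := by ring

theorem chi_even (k : ℕ) (hk : 1 ≤ k) :
    (4 * (k : ℤ)) ∣ (1 - (1 - 2 * (k : ℤ)) ^ k + 2 * (k : ℤ) ^ 2) := by
  have h := sq_dvd_one_add_pow (-2 * (k : ℤ)) k
  have h1 : (4 * (k : ℤ)) ∣ (-2 * (k : ℤ)) ^ 2 := ⟨k, by ring⟩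
  have h2 : (4 * (k : ℤ)) ∣ (1 + -2 * (k : ℤ)) ^ k - 1 - k * (-2 * (k : ℤ)) :=
    h1.trans h
  have h3 : (4 * (k : ℤ)) ∣ 4 * (k : ℤ) ^ 2 := ⟨k, by ring⟩
  have := dvd_sub h3 h2
  convert this using 1
  · rfl
  ring
end

section
/- In the formal power series ring ℚ[[J]], the coefficient of J^{k-1} in the series (1+J)^k · (1+kJ) · (1+2kJ)^{-1} equals (1 - (1-2k)^k + 2k^2)/(4k), for every integer k ≥ 1. -/
open PowerSeries Finset

lemma coeff_one_add_X_pow (k m : ℕ) :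
    PowerSeries.coeff (R := ℚ) m ((1 + X) ^ k) = k.choose m := by
  rw [add_comm, add_pow]
  simp only [map_sum, one_pow, mul_one]
  rw [Finset.sum_congr rfl (g := fun i => if m = i then (k.choose i : ℚ) else 0)
    (fun i _ => by
      rw [show ((k.choose i : ℚ⟦X⟧)) = C (R := ℚ) (k.choose i) from (map_natCast (C (R := ℚ)) _).symm]
      simp only [PowerSeries.coeff_X_pow_mul', PowerSeries.coeff_C]
      rcases eq_or_ne m i with rfl | h
      · simp
      · rcases le_or_gt i m with h2 | h2
        · rw [if_pos h2, if_neg (by omega), if_neg h]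
        · rw [if_neg (by omega), if_neg h]),
    Finset.sum_ite_eq (range (k+1)) m]
  rcases le_or_gt m k with h | h
  · rw [if_pos (by simp; omega)]
  · rw [if_neg (by simp; omega), Nat.choose_eq_zero_of_lt h, Nat.cast_zero]

theorem chern_class_coeff (k : ℕ) (hk : 1 ≤ k) :
    PowerSeries.coeff (R := ℚ) (k - 1)
      ((1 + PowerSeries.X) ^ k * (1 + PowerSeries.C (R := ℚ) (k : ℚ) * PowerSeries.X) *
        (1 + PowerSeries.C (R := ℚ) (2 * (k : ℚ)) * PowerSeries.X)⁻¹) =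
      (1 - (1 - 2 * (k : ℚ)) ^ k + 2 * (k : ℚ) ^ 2) / (4 * (k : ℚ)) := by
  obtain ⟨n, rfl⟩ : ∃ n, k = n + 1 := ⟨k - 1, (Nat.succ_pred_eq_of_pos hk).symm⟩
  set k := n + 1
  set c : ℚ := (k : ℚ) with hc
  have hc0 : c ≠ 0 := by positivity
  set f : ℚ⟦X⟧ := PowerSeries.mk (fun m => (-(2*c))^m) with hf
  have hconst : constantCoeff (R := ℚ) (1 + C (R := ℚ) (2*c) * X) ≠ 0 := by simp
  have hinv : (1 + C (R := ℚ) (2*c) * X)⁻¹ = f := by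
    rw [PowerSeries.inv_eq_iff_mul_eq_one hconst]
    ext m
    rcases m with _ | m
    · simp [hf]
    · rw [mul_add, mul_one, map_add, mul_comm f (C (R := ℚ) (2*c) * X), mul_assoc,
        PowerSeries.coeff_C_mul, PowerSeries.coeff_succ_X_mul]
      simp [hf, PowerSeries.coeff_mk, pow_succ, coeff_one]
      ring
  have key : (1 + C (R := ℚ) c * X) = C (R := ℚ) (1/2) * (1 + C (R := ℚ) (2*c) * X) + C (R := ℚ) (1/2) := by
    have h12 : (1:ℚ)/2 * (2*c) = c := by ring
    rw [mul_add, mul_one, ← mul_assoc, ← map_mul, h12, add_right_comm, ← map_add]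
    norm_num
  have hsplit : (1 + X) ^ k * (1 + C (R := ℚ) c * X) * (1 + C (R := ℚ) (2*c) * X)⁻¹
      = C (R := ℚ) (1/2) * (1 + X) ^ k + C (R := ℚ) (1/2) * ((1 + X) ^ k * f) := by
    rw [key, hinv]
    have hmul : (1 + C (R := ℚ) (2*c) * X) * f = 1 := by
      rw [← hinv, mul_comm, PowerSeries.inv_mul_cancel _ hconst]
    calc (1 + X) ^ k * (C (R := ℚ) (1/2) * (1 + C (R := ℚ) (2*c) * X) + C (R := ℚ) (1/2)) * f
        = C (R := ℚ) (1/2) * (1 + X) ^ k * ((1 + C (R := ℚ) (2*c) * X) * f)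
          + C (R := ℚ) (1/2) * ((1 + X) ^ k * f) := by ring
      _ = _ := by rw [hmul, mul_one]
  rw [hsplit, map_add, PowerSeries.coeff_C_mul, PowerSeries.coeff_C_mul]
  have h1 : PowerSeries.coeff (R := ℚ) (k - 1) ((1 + X) ^ k) = c := by
    rw [coeff_one_add_X_pow]
    simp [hc, k, Nat.choose_succ_self_right]
  have h2 : PowerSeries.coeff (R := ℚ) (k - 1) ((1 + X) ^ k * f)
      = ((1 - 2*c)^k - 1) / (-(2*c)) := by
    rw [PowerSeries.coeff_mul, Finset.Nat.sum_antidiagonal_eq_sum_range_succ_mk]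
    have : ∀ i ∈ range (k - 1 + 1), PowerSeries.coeff (R := ℚ) i ((1+X)^k) *
        PowerSeries.coeff (R := ℚ) (k - 1 - i) f = (k.choose i : ℚ) * (-(2*c))^(k-1-i) := by
      intro i _
      rw [coeff_one_add_X_pow, hf, PowerSeries.coeff_mk]
    rw [Finset.sum_congr rfl this]
    have hmulS : (-(2*c)) * ∑ i ∈ range (k - 1 + 1), (k.choose i : ℚ) * (-(2*c))^(k-1-i)
        = (1 - 2*c)^k - 1 := by
      rw [Finset.mul_sum]
      have : ∀ i ∈ range (k - 1 + 1), (-(2*c)) * ((k.choose i : ℚ) * (-(2*c))^(k-1-i))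
          = (-(2*c))^(k-i) * (k.choose i) := by
        intro i hi
        simp only [Finset.mem_range] at hi
        rw [show k - i = (k - 1 - i) + 1 by omega, pow_succ]
        ring
      rw [Finset.sum_congr rfl this]
      have := add_pow (1:ℚ) (-(2*c)) k
      rw [Finset.sum_range_succ] at this
      simp only [Nat.choose_self, Nat.cast_one, Nat.sub_self, pow_zero, one_pow,
        mul_one, one_mul] at this
      have hk1 : k - 1 + 1 = k := by omega
      rw [hk1]
      have : (1 + -(2*c))^k = (∑ i ∈ range k, (-(2*c))^(k-i) * (k.choose i)) + 1 := this
      rw [show (1:ℚ) - 2*c = 1 + -(2*c) by ring, this]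
      ring
    field_simp at hmulS ⊢
    linarith [hmulS]
  rw [h1, h2]
  rw [show c = (k:ℚ) from hc] at *
  field_simp
  ring
end
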